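/- Discrete energy inequality for the matrix-valued neo-Hookean update: let F_n, F_{n+1} be d×d matrices with positive determinant and G a d×d matrix with F_{n+1} = F_n + Δt·G, Δt > 0. Then Ψ(F_{n+1}) − Ψ(F_n) ≤ Δt·c₁·(F_{n+1}:G) − Δt·c₁·tr(F_{n+1}⁻¹G) + (c₁Δt²/2)(|F_{n+1}⁻¹G|² − |G|²), where Ψ(F) = (c₁/2)(tr(FFᵀ)−d) − c₁ ln det F, A:B = tr(ABᵀ), |A|² = A:A. -/

import Mathlib

open Matrix
theorem log_det_le_trace (d : ℕ) (M : Matrix (Fin d) (Fin d) ℝ) (hM : 0 < M.det) :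
    2 * Real.log M.det ≤ (M * Mᵀ).trace - d := by
  have hS : (M * Mᵀ).IsHermitian := by
    simpa [conjTranspose_eq_transpose_of_trivial] using Matrix.isHermitian_mul_conjTranspose_self M
  have hPSD : (M * Mᵀ).PosSemidef := by
    simpa [conjTranspose_eq_transpose_of_trivial] using Matrix.posSemidef_conjTranspose_mul_self Mᵀ
  have hdetS : (M * Mᵀ).det = M.det ^ 2 := by
    rw [det_mul, det_transpose]; ring
  have hnn : ∀ i, 0 ≤ hS.eigenvalues i := fun i => hPSD.eigenvalues_nonneg i
  have hprod : (M * Mᵀ).det = ∏ i, hS.eigenvalues i := by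
    simpa using hS.det_eq_prod_eigenvalues
  have hpos : ∀ i, 0 < hS.eigenvalues i := by
    intro i
    rcases lt_or_eq_of_le (hnn i) with h | h
    · exact h
    · exfalso
      have : (M * Mᵀ).det = 0 := by
        rw [hprod]; exact Finset.prod_eq_zero (Finset.mem_univ i) h.symm
      rw [hdetS] at this
      nlinarith
  have htr : (M * Mᵀ).trace = ∑ i, hS.eigenvalues i := by
    conv_lhs => rw [hS.spectral_theorem]
    rw [Unitary.conjStarAlgAut_apply, Matrix.trace_mul_cycle]
    simp [Matrix.trace_diagonal]
  have h1 : Real.log ((M * Mᵀ).det) = ∑ i, Real.log (hS.eigenvalues i) := by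
    rw [hprod, Real.log_prod]
    intro i _; exact ne_of_gt (hpos i)
  have h2 : ∑ i, Real.log (hS.eigenvalues i) ≤ ∑ i, (hS.eigenvalues i - 1) := by
    apply Finset.sum_le_sum
    intro i _; exact Real.log_le_sub_one_of_pos (hpos i)
  have h3 : 2 * Real.log M.det = Real.log ((M * Mᵀ).det) := by
    rw [hdetS, Real.log_pow]; push_cast; ring
  rw [h3, h1, htr]
  simpa [Finset.sum_sub_distrib] using h2

noncomputable def neoHookeanEnergy (d : ℕ) (c₁ : ℝ)
    (F : Matrix (Fin d) (Fin d) ℝ) : ℝ :=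
  (c₁/2) * ((F * Fᵀ).trace - (d : ℝ)) - c₁ * Real.log F.det

theorem neoHookean_discrete_bound (d : ℕ) (c₁ Δt : ℝ) (hc : 0 < c₁)
    (hΔt : 0 < Δt) (Fn Fn1 G : Matrix (Fin d) (Fin d) ℝ)
    (hFn : 0 < Fn.det) (hFn1 : 0 < Fn1.det) (h : Fn1 = Fn + Δt • G) :
    neoHookeanEnergy d c₁ Fn1 - neoHookeanEnergy d c₁ Fn
      ≤ Δt * c₁ * (Fn1 * Gᵀ).trace - Δt * c₁ * (Fn1⁻¹ * G).trace
        + (c₁ * Δt^2 / 2) *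
          (((Fn1⁻¹ * G) * (Fn1⁻¹ * G)ᵀ).trace - (G * Gᵀ).trace) := by
  set B := Fn1⁻¹ * G with hB
  have hdet1 : Fn1.det ≠ 0 := ne_of_gt hFn1
  have hFn' : Fn = Fn1 - Δt • G := by rw [h]; abel
  -- factorization
  have hfac : Fn = Fn1 * (1 - Δt • B) := by
    rw [hFn', hB, mul_sub, mul_one, Matrix.mul_smul, ← Matrix.mul_assoc,
      Matrix.mul_nonsing_inv _ (isUnit_iff_ne_zero.mpr hdet1), Matrix.one_mul]
  have hdetfac : Fn.det = Fn1.det * (1 - Δt • B).det := by rw [hfac, det_mul]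
  have hdetM : 0 < (1 - Δt • B).det := by
    have := hdetfac
    nlinarith
  -- log part
  have hlog : Real.log Fn.det = Real.log Fn1.det + Real.log (1 - Δt • B).det := by
    rw [hdetfac, Real.log_mul hdet1 (ne_of_gt hdetM)]
  have hkey := log_det_le_trace d (1 - Δt • B) hdetM
  -- expand trace of (1 - Δt•B)(1 - Δt•B)ᵀ
  have htrB : ((1 - Δt • B) * (1 - Δt • B)ᵀ).trace
      = (d : ℝ) - 2 * Δt * B.trace + Δt^2 * (B * Bᵀ).trace := by
    have hBt : (Bᵀ).trace = B.trace := Matrix.trace_transpose B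
    simp only [transpose_sub, transpose_smul, transpose_one, sub_mul, mul_sub,
      Matrix.mul_one, Matrix.one_mul, smul_mul_assoc, Matrix.mul_smul,
      trace_sub, trace_smul, trace_one, smul_smul, smul_eq_mul, Fintype.card_fin]
    rw [hBt]
    push_cast
    ring
  -- trace identity
  have hGF : (G * Fn1ᵀ).trace = (Fn1 * Gᵀ).trace := by
    rw [← Matrix.trace_transpose (G * Fn1ᵀ), Matrix.transpose_mul, Matrix.transpose_transpose,
      Matrix.trace_mul_comm]
  have htid : (Fn1 * Fn1ᵀ).trace - (Fn * Fnᵀ).trace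
      = 2 * Δt * (Fn1 * Gᵀ).trace - Δt^2 * (G * Gᵀ).trace := by
    rw [hFn']
    simp only [transpose_sub, transpose_smul, sub_mul, mul_sub,
      smul_mul_assoc, Matrix.mul_smul, trace_sub, trace_smul, smul_smul, smul_eq_mul]
    rw [hGF]
    ring
  rw [htrB] at hkey
  unfold neoHookeanEnergy
  nlinarith [hkey, htid, hlog, mul_pos hc hΔt]
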